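/- Let A = 1 − q·m, Δ₁ = A² − 4h, h₁ = m − (q+1)·m², and suppose A > 0 and Δ₁ > 0; let x₆ = (A − √Δ₁)/2. If m < A/2 and h > h₁, then x₆ > m; consequently the Jacobian matrix of F at E₆ = (x₆, m) has eigenvalues 1 − 2x₆ − q·m > 0 and s·m·(1 − m/x₆) > 0, i.e. two positive real eigenvalues. Moreover, if m < A/2 and h = h₁, then x₆ = m. -/

import Mathlib

/-- The predator–prey vector field
    `F(x,y) = (x(1-x) - q x y - h, s y (1 - y/x)(y - m))`. -/
noncomputable def F (q s h m : ℝ) (p : ℝ × ℝ) : ℝ × ℝ :=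
  (p.1 * (1 - p.1) - q * p.1 * p.2 - h, s * p.2 * (1 - p.2 / p.1) * (p.2 - m))

/-- The continuous linear map `ℝ² → ℝ²` with matrix `[[a, b], [c, d]]`. -/
noncomputable def clm (a b c d : ℝ) : (ℝ × ℝ) →L[ℝ] (ℝ × ℝ) :=
  (a • ContinuousLinearMap.fst ℝ ℝ ℝ + b • ContinuousLinearMap.snd ℝ ℝ ℝ).prod
    (c • ContinuousLinearMap.fst ℝ ℝ ℝ + d • ContinuousLinearMap.snd ℝ ℝ ℝ)

lemma mem_spec1 (a b d : ℝ) : a ∈ spectrum ℝ (!![a,b;0,d] : Matrix (Fin 2) (Fin 2) ℝ) := by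
  rw [spectrum.mem_iff, Matrix.isUnit_iff_isUnit_det]
  simp [Matrix.det_fin_two, Matrix.algebraMap_eq_diagonal]

lemma mem_spec2 (a b d : ℝ) : d ∈ spectrum ℝ (!![a,b;0,d] : Matrix (Fin 2) (Fin 2) ℝ) := by
  rw [spectrum.mem_iff, Matrix.isUnit_iff_isUnit_det]
  simp [Matrix.det_fin_two, Matrix.algebraMap_eq_diagonal]

lemma deriv_F (q s h m x y : ℝ) (hx : x ≠ 0) (hy : y = m) :
    HasFDerivAt (F q s h m)
      (clm (1 - 2*x - q*y) (-q*x) 0 (s*y*(1 - y/x))) ((x, y) : ℝ × ℝ) := by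
  have hfst : HasFDerivAt (fun p : ℝ × ℝ => p.1) (ContinuousLinearMap.fst ℝ ℝ ℝ) (x, y) :=
    hasFDerivAt_fst
  have hsnd : HasFDerivAt (fun p : ℝ × ℝ => p.2) (ContinuousLinearMap.snd ℝ ℝ ℝ) (x, y) :=
    hasFDerivAt_snd
  have h1 := ((hfst.mul ((hasFDerivAt_const (1:ℝ) ((x,y):ℝ×ℝ)).sub hfst)).sub
      ((hfst.const_mul q).mul hsnd)).sub_const h
  have hinv : HasFDerivAt (fun p : ℝ × ℝ => (p.1)⁻¹)
      (((ContinuousLinearMap.smulRight (1 : ℝ →L[ℝ] ℝ) (-(x^2)⁻¹))).comp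
        (ContinuousLinearMap.fst ℝ ℝ ℝ)) (x, y) :=
    ((hasDerivAt_inv hx).hasFDerivAt).comp (x, y) hfst
  have h2 := (((hsnd.const_mul s).mul
      ((hasFDerivAt_const (1:ℝ) ((x,y):ℝ×ℝ)).sub (hsnd.mul hinv))).mul
      (hsnd.sub_const m))
  have h3 := HasFDerivAt.prodMk h1 h2
  have hFeq : F q s h m = fun p : ℝ × ℝ =>
      (p.1 * (1 - p.1) - q * p.1 * p.2 - h, s * p.2 * (1 - p.2 * (p.1)⁻¹) * (p.2 - m)) := by
    funext p; simp [F, div_eq_mul_inv]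
  rw [hFeq]
  refine h3.congr_fderiv ?_
  refine ContinuousLinearMap.ext fun v => Prod.ext ?_ ?_ <;>
    simp only [clm, ContinuousLinearMap.prod_apply, ContinuousLinearMap.add_apply,
      ContinuousLinearMap.smul_apply, ContinuousLinearMap.sub_apply,
      ContinuousLinearMap.zero_apply, ContinuousLinearMap.coe_fst',
      ContinuousLinearMap.coe_snd', ContinuousLinearMap.comp_apply,
      ContinuousLinearMap.smulRight_apply, ContinuousLinearMap.one_apply,
      smul_eq_mul, hy, Pi.mul_apply, Pi.sub_apply] <;>
    field_simp <;> ring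

/-- With `A = 1 - q m > 0`, `Δ₁ = A² - 4h > 0`, `h₁ = m - (q+1)m²`, and
`x₆ = (A - √Δ₁)/2`: if `m < A/2` and `h > h₁` then `x₆ > m` and the Jacobian of `F` at
`E₆ = (x₆, m)` has the two positive eigenvalues `1 - 2x₆ - q m` and `s m (1 - m/x₆)`;
moreover if `m < A/2` and `h = h₁` then `x₆ = m`. -/
theorem stmt13 (q s h m x6 : ℝ) (hq : 0 < q) (hs : 0 < s) (hh : 0 < h)
    (hm0 : 0 < m) (hm1 : m < 1)
    (hA : 0 < 1 - q*m) (hΔ : 0 < (1 - q*m)^2 - 4*h)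
    (hx6 : x6 = (1 - q*m - Real.sqrt ((1 - q*m)^2 - 4*h))/2) :
    ((m < (1 - q*m)/2 ∧ m - (q+1)*m^2 < h) →
      m < x6 ∧
      HasFDerivAt (F q s h m)
        (clm (1 - 2*x6 - q*m) (-q*x6) 0 (s*m*(1 - m/x6))) ((x6, m) : ℝ × ℝ) ∧
      (1 - 2*x6 - q*m) ∈ spectrum ℝ
        (!![1 - 2*x6 - q*m, -q*x6; 0, s*m*(1 - m/x6)] : Matrix (Fin 2) (Fin 2) ℝ) ∧
      (s*m*(1 - m/x6)) ∈ spectrum ℝ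
        (!![1 - 2*x6 - q*m, -q*x6; 0, s*m*(1 - m/x6)] : Matrix (Fin 2) (Fin 2) ℝ) ∧
      0 < 1 - 2*x6 - q*m ∧ 0 < s*m*(1 - m/x6)) ∧
    ((m < (1 - q*m)/2 ∧ h = m - (q+1)*m^2) → x6 = m) := by
  set A := 1 - q*m with hAdef
  constructor
  · rintro ⟨hmA, hh1⟩
    have hr0 : 0 < Real.sqrt (A^2 - 4*h) := Real.sqrt_pos.mpr hΔ
    have hAm : 0 < A - 2*m := by linarith
    have hrlt : Real.sqrt (A^2 - 4*h) < A - 2*m := by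
      rw [Real.sqrt_lt' hAm]
      nlinarith [hh1]
    have hmx6 : m < x6 := by rw [hx6]; linarith
    have hx6pos : 0 < x6 := lt_trans hm0 hmx6
    have hAx6 : 1 - 2*x6 - q*m = Real.sqrt (A^2 - 4*h) := by
      rw [hx6, hAdef]; ring
    have hpos1 : 0 < 1 - 2*x6 - q*m := by rw [hAx6]; exact hr0
    have hpos2 : 0 < s*m*(1 - m/x6) := by
      have : m / x6 < 1 := (div_lt_one hx6pos).mpr hmx6
      have h1 : 0 < 1 - m/x6 := by linarith
      positivity
    exact ⟨hmx6, deriv_F q s h m x6 m (ne_of_gt hx6pos) rfl,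
      mem_spec1 _ _ _, mem_spec2 _ _ _, hpos1, hpos2⟩
  · rintro ⟨hmA, hh2⟩
    have hAm : (0:ℝ) ≤ A - 2*m := by linarith
    have hΔeq : A^2 - 4*h = (A - 2*m)^2 := by
      rw [hh2, hAdef]; ring
    rw [hx6, hΔeq, Real.sqrt_sq hAm]
    ring
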